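/- Let U ⊆ ℝ² be open with coordinates (t, r) and r > 0 on U, let f : (0, ∞) → ℝ, let l be a natural number, and let h₀, h₁t, h₁r, h₂, ζ_t, ζ_r, ζ_e : U → ℝ be continuously differentiable. Define the gauge-transformed fields h₁t^Y = h₁t + ζ_t/r + ∂_t ζ_e, h₁r^Y = h₁r + ζ_r/r + ∂_r ζ_e − ζ_e/r, h₂^Y = h₂ + (2/r) ζ_e, and h₀^Y = h₀ + (4/r)·( −(l(l+1)/2) ζ_e + f(r) ζ_r ). With Y_r := r·h₁r − (r²/2) ∂_r h₂, the combination F := h₀ − (4/r) f(r) Y_r + l(l+1) h₂ is gauge invariant: the same combination built from the transformed fields equals F on U. -/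

import Mathlib

/-- Partial derivative with respect to the first coordinate `t`. -/
noncomputable def pdt (g : ℝ → ℝ → ℝ) : ℝ → ℝ → ℝ := fun t r => deriv (fun s => g s r) t

/-- Partial derivative with respect to the second coordinate `r`. -/
noncomputable def pdr (g : ℝ → ℝ → ℝ) : ℝ → ℝ → ℝ := fun t r => deriv (fun s => g t s) r

/-- Gauge invariance of the even-parity scalar
`F := h₀ − (4/r) f(r) Y_r + l(l+1) h₂` with `Y_r := r h₁r − (r²/2) ∂_r h₂`:
under the second-kind gauge transformation
`h₁t ↦ h₁t + ζ_t/r + ∂_t ζ_e`, `h₁r ↦ h₁r + ζ_r/r + ∂_r ζ_e − ζ_e/r`,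
`h₂ ↦ h₂ + (2/r) ζ_e`, `h₀ ↦ h₀ + (4/r)(−(l(l+1)/2) ζ_e + f(r) ζ_r)`,
the combination `F` is unchanged on `U`. -/
theorem stmt_8 (U : Set (ℝ × ℝ)) (hU : IsOpen U) (hrpos : ∀ p ∈ U, 0 < p.2)
    (f : ℝ → ℝ) (l : ℕ)
    (h0 h1t h1r h2 ζt ζr ζe : ℝ → ℝ → ℝ)
    (hh0 : ContDiffOn ℝ 1 (fun p : ℝ × ℝ => h0 p.1 p.2) U)
    (hh1t : ContDiffOn ℝ 1 (fun p : ℝ × ℝ => h1t p.1 p.2) U)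
    (hh1r : ContDiffOn ℝ 1 (fun p : ℝ × ℝ => h1r p.1 p.2) U)
    (hh2 : ContDiffOn ℝ 1 (fun p : ℝ × ℝ => h2 p.1 p.2) U)
    (hζt : ContDiffOn ℝ 1 (fun p : ℝ × ℝ => ζt p.1 p.2) U)
    (hζr : ContDiffOn ℝ 1 (fun p : ℝ × ℝ => ζr p.1 p.2) U)
    (hζe : ContDiffOn ℝ 1 (fun p : ℝ × ℝ => ζe p.1 p.2) U)
    (h0Y h1tY h1rY h2Y : ℝ → ℝ → ℝ)
    (hh1tY : ∀ t r, h1tY t r = h1t t r + ζt t r / r + pdt ζe t r)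
    (hh1rY : ∀ t r, h1rY t r = h1r t r + ζr t r / r + pdr ζe t r - ζe t r / r)
    (hh2Y : ∀ t r, h2Y t r = h2 t r + 2 / r * ζe t r)
    (hh0Y : ∀ t r, h0Y t r = h0 t r
        + 4 / r * (-((l : ℝ) * ((l : ℝ) + 1) / 2) * ζe t r + f r * ζr t r)) :
    ∀ t r, (t, r) ∈ U →
      h0Y t r - 4 / r * f r * (r * h1rY t r - r ^ 2 / 2 * pdr h2Y t r)
          + (l : ℝ) * ((l : ℝ) + 1) * h2Y t r
        = h0 t r - 4 / r * f r * (r * h1r t r - r ^ 2 / 2 * pdr h2 t r)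
          + (l : ℝ) * ((l : ℝ) + 1) * h2 t r := by
  intro t r hmem
  have hr : 0 < r := hrpos (t, r) hmem
  have hrne : r ≠ 0 := hr.ne'
  have hcurve : DifferentiableAt ℝ (fun s : ℝ => ((t, s) : ℝ × ℝ)) r :=
    DifferentiableAt.prodMk (differentiableAt_const t) differentiableAt_id
  have hd2 : DifferentiableAt ℝ (fun s => h2 t s) r := by
    have := ((hh2.differentiableOn one_ne_zero).differentiableAt (hU.mem_nhds hmem))
    exact this.comp r hcurve
  have hde : DifferentiableAt ℝ (fun s => ζe t s) r := by
    have := ((hζe.differentiableOn one_ne_zero).differentiableAt (hU.mem_nhds hmem))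
    exact this.comp r hcurve
  have hdc : DifferentiableAt ℝ (fun s : ℝ => 2 / s) r :=
    (differentiableAt_const (2:ℝ)).div differentiableAt_id hrne
  have hcd : deriv (fun s : ℝ => 2 / s) r = -(2 / r ^ 2) := by
    have h := ((hasDerivAt_inv hrne).const_mul (2:ℝ)).deriv
    simp only [div_eq_mul_inv]
    rw [h]; field_simp
  have key : pdr h2Y t r = pdr h2 t r + (-(2 / r ^ 2) * ζe t r + 2 / r * pdr ζe t r) := by
    have hfun : (fun s => h2Y t s) = fun s => h2 t s + 2 / s * ζe t s := funext fun s => hh2Y t s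
    unfold pdr
    rw [hfun, deriv_fun_add hd2 (hdc.fun_mul hde), deriv_fun_mul hdc hde, hcd]
  rw [hh0Y, hh1rY, hh2Y, key]
  field_simp
  ring
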